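/- (Strong duality.) Let m₀ ∈ M(𝕋) and set y₀ = Φ̃(m₀) ∈ ℝ^L. Then the optimal values of the primal and dual problems coincide: inf { ‖m‖_TV : m ∈ M(𝕋), Φ̃(m) = y₀ } = sup { ⟨y₀, p⟩ : p ∈ ℝ^L, ‖Φ̃*(p)‖_∞ ≤ 1 }, where ⟨y, p⟩ = Σ_{ℓ=1}^{L} y_ℓ·p_ℓ. -/

import Mathlib

open MeasureTheory
open scoped NNReal Pointwise

set_option linter.unusedSectionVars false
set_option maxHeartbeats 1000000

/-- Total variation norm of a finite signed measure: `‖m‖_TV = m⁺(univ) + m⁻(univ)`. -/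
noncomputable def tvNorm {X : Type*} [MeasurableSpace X] (m : SignedMeasure X) : ℝ :=
  (m.totalVariation Set.univ).toReal

/-- Pairing of a function with a signed measure: `∫ η dm = ∫ η dm⁺ − ∫ η dm⁻`. -/
noncomputable def pairing {X : Type*} [MeasurableSpace X]
    (η : X → ℝ) (m : SignedMeasure X) : ℝ :=
  (∫ x, η x ∂m.toJordanDecomposition.posPart) - ∫ x, η x ∂m.toJordanDecomposition.negPart

/-- Supremum norm `‖η‖_∞ = sup_t |η t|`. -/
noncomputable def supNorm {X : Type*} (η : X → ℝ) : ℝ :=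
  sSup (Set.range fun t => |η t|)

section Aux

lemma sum_extend_emb {ι κ β : Type*} [Fintype ι] [Fintype κ] [AddCommMonoid β]
    (emb : ι ↪ κ) (F : κ → β) (hF : ∀ j, (¬ ∃ i, emb i = j) → F j = 0) :
    ∑ j, F j = ∑ i, F (emb i) := by
  rw [← Finset.sum_map Finset.univ emb F]
  refine (Finset.sum_subset (Finset.subset_univ _) fun j _ hj => ?_).symm
  exact hF j (by simpa [Finset.mem_map] using hj)

/-- The convex hull of a compact set containing `0` in a finite-dimensional normed space
is compact. -/
lemma isCompact_convexHull_of_compact {E : Type*} [NormedAddCommGroup E] [NormedSpace ℝ E]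
    [FiniteDimensional ℝ E] {A : Set E} (hA : IsCompact A) (h0 : (0:E) ∈ A) :
    IsCompact (convexHull ℝ A) := by
  set n := Module.finrank ℝ E + 1 with hn
  set G : (Fin n → ℝ) × (Fin n → E) → E := fun q => ∑ j, q.1 j • q.2 j with hGdef
  set D : Set ((Fin n → ℝ) × (Fin n → E)) :=
    (stdSimplex ℝ (Fin n)) ×ˢ (Set.univ.pi fun _ => A) with hDdef
  have hDc : IsCompact D := (isCompact_stdSimplex ℝ _).prod (isCompact_univ_pi fun _ => hA)
  have hG : Continuous G :=
    continuous_finset_sum _ fun j _ =>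
      ((continuous_apply j).comp continuous_fst).smul ((continuous_apply j).comp continuous_snd)
  have him : convexHull ℝ A = G '' D := by
    apply Set.Subset.antisymm
    · intro x hx
      obtain ⟨ι, hι, z, w, hrange, hAI, hpos, hsum1, hsum⟩ :=
        eq_pos_convex_span_of_mem_convexHull hx
      letI := hι
      haveI : Nonempty ι := by
        by_contra h
        have h0' : ∑ i, w i = 0 :=
          Finset.sum_eq_zero fun i _ => absurd ⟨i⟩ h
        rw [hsum1] at h0'
        exact one_ne_zero h0'
      have hcard : Fintype.card ι ≤ n := by
        have h := hAI.finrank_vectorSpan_add_one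
        have h2 : Module.finrank ℝ (vectorSpan ℝ (Set.range z)) ≤ Module.finrank ℝ E :=
          Submodule.finrank_le _
        omega
      let emb : ι ↪ Fin n := (Fintype.equivFin ι).toEmbedding.trans (Fin.castLEEmb hcard)
      set W : Fin n → ℝ := Function.extend emb w 0 with hW
      set Z : Fin n → E := Function.extend emb z 0 with hZ
      have hWemb : ∀ i, W (emb i) = w i := fun i => emb.injective.extend_apply w 0 i
      have hZemb : ∀ i, Z (emb i) = z i := fun i => emb.injective.extend_apply z 0 i
      have hWout : ∀ j, (¬ ∃ i, emb i = j) → W j = 0 := fun j h => by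
        rw [hW, Function.extend_apply' _ _ _ h]; rfl
      have hZout : ∀ j, (¬ ∃ i, emb i = j) → Z j = 0 := fun j h => by
        rw [hZ, Function.extend_apply' _ _ _ h]; rfl
      have hWpos : ∀ j, 0 ≤ W j := by
        intro j
        by_cases h : ∃ i, emb i = j
        · obtain ⟨i, rfl⟩ := h; rw [hWemb]; exact (hpos i).le
        · rw [hWout j h]
      have hWsum : ∑ j, W j = 1 := by
        rw [sum_extend_emb emb W hWout]; simpa [hWemb] using hsum1
      have hZA : ∀ j, Z j ∈ A := by
        intro j
        by_cases h : ∃ i, emb i = j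
        · obtain ⟨i, rfl⟩ := h; rw [hZemb]; exact hrange (Set.mem_range_self i)
        · rw [hZout j h]; exact h0
      refine ⟨(W, Z), ⟨⟨hWpos, hWsum⟩, fun j _ => hZA j⟩, ?_⟩
      have hGval : G (W, Z) = ∑ j, W j • Z j := rfl
      rw [hGval, sum_extend_emb emb (fun j => W j • Z j)
        (fun j h => by show W j • Z j = 0; rw [hWout j h, zero_smul])]
      simpa [hWemb, hZemb] using hsum
    · rintro x ⟨⟨w, z⟩, ⟨hw, hz⟩, rfl⟩
      exact (convex_convexHull ℝ A).sum_mem (fun j _ => hw.1 j) hw.2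
        (fun j _ => subset_convexHull ℝ A (hz j (Set.mem_univ j)))
  rw [him]
  exact hDc.image hG

variable {X : Type*} [MeasurableSpace X] [TopologicalSpace X] [OpensMeasurableSpace X]
  [CompactSpace X] [Nonempty X]

lemma cont_integrable {η : X → ℝ} (hη : Continuous η) (μ : Measure X) [IsFiniteMeasure μ] :
    Integrable η μ :=
  hη.integrable_of_hasCompactSupport (HasCompactSupport.of_compactSpace η)

lemma sm_apply (m : SignedMeasure X) {A : Set X} (hA : MeasurableSet A) :
    m A = (m.toJordanDecomposition.posPart A).toReal
        - (m.toJordanDecomposition.negPart A).toReal := by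
  conv_lhs => rw [← m.toSignedMeasure_toJordanDecomposition]
  rw [JordanDecomposition.toSignedMeasure, VectorMeasure.sub_apply,
    Measure.toSignedMeasure_apply_measurable hA, Measure.toSignedMeasure_apply_measurable hA]
  rfl

lemma jd_add (m m' : SignedMeasure X) :
    (m + m').toJordanDecomposition.posPart + m.toJordanDecomposition.negPart
        + m'.toJordanDecomposition.negPart
      = (m + m').toJordanDecomposition.negPart + m.toJordanDecomposition.posPart
        + m'.toJordanDecomposition.posPart := by
  ext A hA
  have h1 := sm_apply (m + m') hA
  have h2 := sm_apply m hA
  have h3 := sm_apply m' hA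
  have hadd : (m + m') A = m A + m' A := rfl
  rw [← ENNReal.toReal_eq_toReal_iff' (by finiteness) (by finiteness)]
  simp only [Measure.add_apply]
  rw [ENNReal.toReal_add (by finiteness) (by finiteness),
      ENNReal.toReal_add (by finiteness) (by finiteness),
      ENNReal.toReal_add (by finiteness) (by finiteness),
      ENNReal.toReal_add (by finiteness) (by finiteness)]
  linarith [hadd, h1, h2, h3]

lemma pairing_add {η : X → ℝ} (hη : Continuous η) (m m' : SignedMeasure X) :
    pairing η (m + m') = pairing η m + pairing η m' := by
  have key := congrArg (fun μ : Measure X => ∫ x, η x ∂μ) (jd_add m m')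
  simp only [integral_add_measure (((cont_integrable hη _)).add_measure (cont_integrable hη _))
    (cont_integrable hη _),
    integral_add_measure (cont_integrable hη _) (cont_integrable hη _)] at key
  unfold pairing
  linarith

lemma pairing_zero (η : X → ℝ) : pairing η (0 : SignedMeasure X) = 0 := by
  unfold pairing
  rw [SignedMeasure.toJordanDecomposition_zero]
  simp

lemma pairing_zero_fun (m : SignedMeasure X) : pairing (fun _ => (0:ℝ)) m = 0 := by
  simp [pairing]

lemma pairing_neg (η : X → ℝ) (m : SignedMeasure X) : pairing η (-m) = - pairing η m := by
  unfold pairing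
  rw [SignedMeasure.toJordanDecomposition_neg]
  simp [JordanDecomposition.neg_posPart, JordanDecomposition.neg_negPart]

lemma jd_tsm (μ : Measure X) [IsFiniteMeasure μ] :
    μ.toSignedMeasure.toJordanDecomposition
      = ⟨μ, 0, Measure.MutuallySingular.zero_right⟩ := by
  have h : (⟨μ, 0, Measure.MutuallySingular.zero_right⟩ : JordanDecomposition X).toSignedMeasure
      = μ.toSignedMeasure := by
    simp [JordanDecomposition.toSignedMeasure, Measure.toSignedMeasure_zero]
  rw [← h, JordanDecomposition.toJordanDecomposition_toSignedMeasure]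

lemma pairing_tsm (η : X → ℝ) (μ : Measure X) [IsFiniteMeasure μ] :
    pairing η μ.toSignedMeasure = ∫ x, η x ∂μ := by
  unfold pairing
  rw [jd_tsm]
  simp

lemma tvNorm_eq (m : SignedMeasure X) :
    tvNorm m = (m.toJordanDecomposition.posPart Set.univ).toReal
        + (m.toJordanDecomposition.negPart Set.univ).toReal := by
  unfold tvNorm SignedMeasure.totalVariation
  rw [Measure.add_apply, ENNReal.toReal_add (by finiteness) (by finiteness)]

lemma tvNorm_nonneg (m : SignedMeasure X) : 0 ≤ tvNorm m := ENNReal.toReal_nonneg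

lemma tvNorm_zero : tvNorm (0 : SignedMeasure X) = 0 := by
  unfold tvNorm
  rw [SignedMeasure.totalVariation_zero]
  simp

lemma tvNorm_neg (m : SignedMeasure X) : tvNorm (-m) = tvNorm m := by
  unfold tvNorm
  rw [SignedMeasure.totalVariation_neg]

lemma tvNorm_tsm (μ : Measure X) [IsFiniteMeasure μ] :
    tvNorm μ.toSignedMeasure = (μ Set.univ).toReal := by
  rw [tvNorm_eq, jd_tsm]
  simp

lemma tvNorm_add_le (m m' : SignedMeasure X) : tvNorm (m + m') ≤ tvNorm m + tvNorm m' := by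
  obtain ⟨B, hBm, h1, h2⟩ := (m + m').toJordanDecomposition.mutuallySingular
  have hposu : (m + m').toJordanDecomposition.posPart Set.univ
      = (m + m').toJordanDecomposition.posPart Bᶜ := by
    rw [← measure_add_measure_compl hBm, h1, zero_add]
  have hnegu : (m + m').toJordanDecomposition.negPart Set.univ
      = (m + m').toJordanDecomposition.negPart B := by
    rw [← measure_add_measure_compl hBm, h2, add_zero]
  have key : tvNorm (m + m') = (m + m') Bᶜ - (m + m') B := by
    rw [tvNorm_eq, hposu, hnegu, sm_apply (m + m') hBm.compl, sm_apply (m + m') hBm, h1, h2]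
    simp
  have hadd : ∀ C : Set X, (m + m') C = m C + m' C := fun C => rfl
  have bound : ∀ n : SignedMeasure X, n Bᶜ - n B ≤ tvNorm n := by
    intro n
    rw [sm_apply n hBm.compl, sm_apply n hBm, tvNorm_eq]
    have e1 : (n.toJordanDecomposition.posPart Bᶜ).toReal
        ≤ (n.toJordanDecomposition.posPart Set.univ).toReal :=
      ENNReal.toReal_mono (by finiteness) (measure_mono (Set.subset_univ _))
    have e2 : (n.toJordanDecomposition.negPart B).toReal
        ≤ (n.toJordanDecomposition.negPart Set.univ).toReal :=
      ENNReal.toReal_mono (by finiteness) (measure_mono (Set.subset_univ _))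
    have e3 : 0 ≤ (n.toJordanDecomposition.negPart Bᶜ).toReal := ENNReal.toReal_nonneg
    have e4 : 0 ≤ (n.toJordanDecomposition.posPart B).toReal := ENNReal.toReal_nonneg
    linarith
  have b1 := bound m
  have b2 := bound m'
  rw [key, hadd Bᶜ, hadd B]
  linarith

lemma pairing_finset_sum {η : X → ℝ} (hη : Continuous η) {ι : Type*} (s : Finset ι)
    (m : ι → SignedMeasure X) :
    pairing η (∑ i ∈ s, m i) = ∑ i ∈ s, pairing η (m i) := by
  classical
  induction s using Finset.cons_induction with
  | empty => simpa using pairing_zero η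
  | cons a s ha ih => rw [Finset.sum_cons, Finset.sum_cons, pairing_add hη, ih]

lemma tvNorm_finset_sum_le {ι : Type*} (s : Finset ι) (m : ι → SignedMeasure X) :
    tvNorm (∑ i ∈ s, m i) ≤ ∑ i ∈ s, tvNorm (m i) := by
  classical
  induction s using Finset.cons_induction with
  | empty => simp [tvNorm_zero]
  | cons a s ha ih =>
      rw [Finset.sum_cons, Finset.sum_cons]
      exact (tvNorm_add_le _ _).trans (by linarith)

lemma le_supNorm {η : X → ℝ} (hη : Continuous η) (t : X) : |η t| ≤ supNorm η :=
  le_csSup (isCompact_range hη.abs).bddAbove ⟨t, rfl⟩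

lemma supNorm_nonneg {η : X → ℝ} (hη : Continuous η) : 0 ≤ supNorm η :=
  le_trans (abs_nonneg _) (le_supNorm hη (Classical.arbitrary X))

lemma abs_integral_le {η : X → ℝ} (hη : Continuous η) (μ : Measure X) [IsFiniteMeasure μ] :
    |∫ x, η x ∂μ| ≤ supNorm η * (μ Set.univ).toReal := by
  have := norm_integral_le_of_norm_le_const (μ := μ) (f := η) (C := supNorm η)
    (Filter.Eventually.of_forall fun t => by
      rw [Real.norm_eq_abs]; exact le_supNorm hη t)
  simpa [Real.norm_eq_abs, measureReal_def] using this

lemma pairing_abs_le {η : X → ℝ} (hη : Continuous η) (m : SignedMeasure X) :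
    |pairing η m| ≤ supNorm η * tvNorm m := by
  unfold pairing
  rw [tvNorm_eq, mul_add]
  calc |(∫ x, η x ∂m.toJordanDecomposition.posPart) - ∫ x, η x ∂m.toJordanDecomposition.negPart|
      ≤ |∫ x, η x ∂m.toJordanDecomposition.posPart|
          + |∫ x, η x ∂m.toJordanDecomposition.negPart| := abs_sub _ _
    _ ≤ _ := add_le_add (abs_integral_le hη _) (abs_integral_le hη _)

lemma pairing_comb {L : ℕ} (p : Fin L → ℝ) (φ : Fin L → X → ℝ) (hφ : ∀ ℓ, Continuous (φ ℓ))
    (m : SignedMeasure X) :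
    pairing (fun t => ∑ ℓ, p ℓ * φ ℓ t) m = ∑ ℓ, p ℓ * pairing (φ ℓ) m := by
  unfold pairing
  rw [integral_finset_sum (f := fun ℓ t => p ℓ * φ ℓ t) _ (fun ℓ _ => cont_integrable (continuous_const.mul (hφ ℓ)) _),
      integral_finset_sum (f := fun ℓ t => p ℓ * φ ℓ t) _ (fun ℓ _ => cont_integrable (continuous_const.mul (hφ ℓ)) _),
      ← Finset.sum_sub_distrib]
  refine Finset.sum_congr rfl fun ℓ _ => ?_
  rw [MeasureTheory.integral_const_mul, MeasureTheory.integral_const_mul, mul_sub]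

end Aux

/-- **strong duality.** With continuous measurements
`φ_1, …, φ_L : 𝕋 → ℝ`, `Φ̃(m) = (∫ φ_ℓ dm)_ℓ`, `Φ̃*(p) = Σ_ℓ p_ℓ·φ_ℓ`, and data
`y₀ = Φ̃(m₀)`, the primal and dual optimal values coincide:
`inf { ‖m‖_TV : Φ̃(m) = y₀ } = sup { ⟨y₀, p⟩ : ‖Φ̃*(p)‖_∞ ≤ 1 }`. -/
theorem strong_duality_continuous_basis_pursuit (T : ℝ) [Fact (0 < T)]
    (L : ℕ) (hL : 1 ≤ L) (φ : Fin L → AddCircle T → ℝ) (hφ : ∀ ℓ, Continuous (φ ℓ))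
    (m₀ : SignedMeasure (AddCircle T)) (y₀ : Fin L → ℝ)
    (hy₀ : ∀ ℓ, pairing (φ ℓ) m₀ = y₀ ℓ) :
    sInf {x : ℝ | ∃ m : SignedMeasure (AddCircle T),
        (∀ ℓ, pairing (φ ℓ) m = y₀ ℓ) ∧ tvNorm m = x}
      = sSup {x : ℝ | ∃ p : Fin L → ℝ,
          supNorm (fun t => ∑ ℓ, p ℓ * φ ℓ t) ≤ 1 ∧ ∑ ℓ, y₀ ℓ * p ℓ = x} := by
  classical
  set Pset := {x : ℝ | ∃ m : SignedMeasure (AddCircle T),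
      (∀ ℓ, pairing (φ ℓ) m = y₀ ℓ) ∧ tvNorm m = x} with hPset
  set Dset := {x : ℝ | ∃ p : Fin L → ℝ,
      supNorm (fun t => ∑ ℓ, p ℓ * φ ℓ t) ≤ 1 ∧ ∑ ℓ, y₀ ℓ * p ℓ = x} with hDset
  have hP0 : tvNorm m₀ ∈ Pset := ⟨m₀, hy₀, rfl⟩
  have hPbdd : BddBelow Pset := ⟨0, by rintro b ⟨m, _, rfl⟩; exact tvNorm_nonneg m⟩
  -- weak duality
  have weak : ∀ a ∈ Dset, ∀ b ∈ Pset, a ≤ b := by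
    rintro a ⟨p, hp1, rfl⟩ b ⟨m, hm, rfl⟩
    have hgc : Continuous (fun t => ∑ ℓ, p ℓ * φ ℓ t) :=
      continuous_finset_sum _ fun ℓ _ => continuous_const.mul (hφ ℓ)
    have key : ∑ ℓ, y₀ ℓ * p ℓ = pairing (fun t => ∑ ℓ, p ℓ * φ ℓ t) m := by
      rw [pairing_comb p φ hφ m]
      exact Finset.sum_congr rfl fun ℓ _ => by rw [hm ℓ, mul_comm]
    calc ∑ ℓ, y₀ ℓ * p ℓ = pairing (fun t => ∑ ℓ, p ℓ * φ ℓ t) m := key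
      _ ≤ |pairing (fun t => ∑ ℓ, p ℓ * φ ℓ t) m| := le_abs_self _
      _ ≤ supNorm (fun t => ∑ ℓ, p ℓ * φ ℓ t) * tvNorm m := pairing_abs_le hgc m
      _ ≤ 1 * tvNorm m := mul_le_mul_of_nonneg_right hp1 (tvNorm_nonneg m)
      _ = tvNorm m := one_mul _
  have hD0 : (0:ℝ) ∈ Dset := by
    refine ⟨0, ?_, by simp⟩
    refine Real.sSup_le ?_ zero_le_one
    rintro x ⟨t, rfl⟩
    simp
  have hDbdd : BddAbove Dset := ⟨tvNorm m₀, fun a ha => weak a ha _ hP0⟩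
  -- the geometry
  set Φδ : AddCircle T → (Fin L → ℝ) := fun t ℓ => φ ℓ t with hΦδ
  have hΦδc : Continuous Φδ := continuous_pi fun ℓ => hφ ℓ
  set S : Set (Fin L → ℝ) := Set.range Φδ with hS
  set A : Set (Fin L → ℝ) := (S ∪ -S) ∪ {0} with hA
  have h0A : (0 : Fin L → ℝ) ∈ A := Or.inr rfl
  have hSA : S ⊆ A := fun x hx => Or.inl (Or.inl hx)
  have hnSA : -S ⊆ A := fun x hx => Or.inl (Or.inr hx)
  have hAc : IsCompact A :=
    (((isCompact_range hΦδc).union (isCompact_range hΦδc).neg)).union isCompact_singleton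
  set K := convexHull ℝ A with hK
  have hKc : IsCompact K := isCompact_convexHull_of_compact hAc h0A
  have hKconv : Convex ℝ K := convex_convexHull ℝ A
  refine le_antisymm ?_ (csSup_le ⟨0, hD0⟩ fun a ha => le_csInf ⟨_, hP0⟩ fun b hb => weak a ha b hb)
  -- strong direction
  refine le_of_forall_lt fun d hd => ?_
  rcases lt_or_ge d 0 with hd0 | hd0
  · exact lt_of_lt_of_le hd0 (le_csSup hDbdd hD0)
  -- 0 ≤ d
  have hynot : y₀ ∉ d • K := by
    intro hmem
    obtain ⟨k, hkK, hky⟩ := Set.mem_smul_set.mp hmem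
    obtain ⟨ι, hι, z, w, hrange, hAI, hpos, hsum1, hsum⟩ :=
      eq_pos_convex_span_of_mem_convexHull hkK
    letI := hι
    have hex : ∀ i : ι, ∃ m : SignedMeasure (AddCircle T),
        (∀ ℓ, pairing (φ ℓ) m = (d * w i) * z i ℓ) ∧ tvNorm m ≤ d * w i := by
      intro i
      have hdw : (0:ℝ) ≤ d * w i := mul_nonneg hd0 (hpos i).le
      rcases hrange (Set.mem_range_self i) with (hzS | hzS) | hz0
      · obtain ⟨t, ht⟩ := hzS
        refine ⟨(((d * w i).toNNReal : ℝ≥0) • Measure.dirac t).toSignedMeasure,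
          fun ℓ => ?_, ?_⟩
        · rw [pairing_tsm, integral_smul_nnreal_measure, integral_dirac]
          show ((d * w i).toNNReal : ℝ) * φ ℓ t = (d * w i) * z i ℓ
          rw [Real.coe_toNNReal _ hdw, ← ht]
        · rw [tvNorm_tsm]
          rw [Measure.smul_apply, measure_univ, ENNReal.smul_def, smul_eq_mul, mul_one, ENNReal.coe_toReal]
          exact (Real.coe_toNNReal _ hdw).le
      · rw [Set.mem_neg] at hzS
        obtain ⟨t, ht⟩ := hzS
        refine ⟨-(((d * w i).toNNReal : ℝ≥0) • Measure.dirac t).toSignedMeasure,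
          fun ℓ => ?_, ?_⟩
        · rw [pairing_neg, pairing_tsm, integral_smul_nnreal_measure, integral_dirac]
          have hφt : φ ℓ t = - z i ℓ := by
            have := congrFun ht ℓ; exact this
          show -(((d * w i).toNNReal : ℝ) * φ ℓ t) = (d * w i) * z i ℓ
          rw [Real.coe_toNNReal _ hdw, hφt]; ring
        · rw [tvNorm_neg, tvNorm_tsm]
          rw [Measure.smul_apply, measure_univ, ENNReal.smul_def, smul_eq_mul, mul_one, ENNReal.coe_toReal]
          exact (Real.coe_toNNReal _ hdw).le
      · have hz : z i = 0 := hz0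
        refine ⟨0, fun ℓ => ?_, ?_⟩
        · rw [pairing_zero, hz]; simp
        · rw [tvNorm_zero]; exact hdw
    choose ms hms1 hms2 using hex
    set m : SignedMeasure (AddCircle T) := ∑ i, ms i with hm
    have hfeas : ∀ ℓ, pairing (φ ℓ) m = y₀ ℓ := by
      intro ℓ
      rw [hm, pairing_finset_sum (hφ ℓ)]
      have : ∑ i, pairing (φ ℓ) (ms i) = ∑ i, (d * w i) * z i ℓ :=
        Finset.sum_congr rfl fun i _ => hms1 i ℓ
      rw [this]
      have hkℓ : (∑ i, w i • z i) ℓ = k ℓ := by rw [hsum]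
      have : ∑ i, (d * w i) * z i ℓ = d * ∑ i, w i * z i ℓ := by
        rw [Finset.mul_sum]; exact Finset.sum_congr rfl fun i _ => by ring
      rw [this]
      have h2 : ∑ i, w i * z i ℓ = k ℓ := by
        rw [← hkℓ, Finset.sum_apply]
        exact Finset.sum_congr rfl fun i _ => rfl
      rw [h2, ← hky]
      rfl
    have htv : tvNorm m ≤ d := by
      calc tvNorm m ≤ ∑ i, tvNorm (ms i) := tvNorm_finset_sum_le _ _
        _ ≤ ∑ i, d * w i := Finset.sum_le_sum fun i _ => hms2 i
        _ = d * ∑ i, w i := by rw [Finset.mul_sum]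
        _ = d := by rw [hsum1, mul_one]
    have : sInf Pset ≤ tvNorm m := csInf_le hPbdd ⟨m, hfeas, rfl⟩
    linarith
  have hdKc : IsCompact (d • K) := hKc.smul d
  have hdKconv : Convex ℝ (d • K) := hKconv.smul d
  obtain ⟨f, u, hfu, hfy⟩ := geometric_hahn_banach_closed_point hdKconv hdKc.isClosed hynot
  set p : Fin L → ℝ := fun ℓ => f (Pi.single ℓ 1) with hp
  have hf : ∀ y : Fin L → ℝ, f y = ∑ ℓ, y ℓ * p ℓ := by
    intro y
    have hy : y = ∑ ℓ, y ℓ • (Pi.single ℓ 1 : Fin L → ℝ) := by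
      funext j
      rw [Finset.sum_apply]
      simp [Pi.single_apply]
    conv_lhs => rw [hy]
    rw [map_sum]
    exact Finset.sum_congr rfl fun ℓ _ => by rw [_root_.map_smul, smul_eq_mul]
  set g : AddCircle T → ℝ := fun t => ∑ ℓ, p ℓ * φ ℓ t with hg
  have hgc : Continuous g := continuous_finset_sum _ fun ℓ _ => continuous_const.mul (hφ ℓ)
  have hgf : ∀ t, f (Φδ t) = g t := by
    intro t
    rw [hf]
    exact Finset.sum_congr rfl fun ℓ _ => mul_comm _ _
  have hu0 : (0:ℝ) < u := by
    have h0mem : (0 : Fin L → ℝ) ∈ d • K :=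
      ⟨0, subset_convexHull ℝ A h0A, smul_zero d⟩
    have := hfu 0 h0mem
    simpa using this
  have hdg : ∀ t, d * |g t| < u := by
    intro t
    have h1 := hfu (d • Φδ t) (Set.smul_mem_smul_set (subset_convexHull ℝ A (hSA ⟨t, rfl⟩)))
    have h2 := hfu (d • (-Φδ t))
      (Set.smul_mem_smul_set (subset_convexHull ℝ A (hnSA (by rw [Set.mem_neg, neg_neg]; exact ⟨t, rfl⟩))))
    rw [_root_.map_smul, smul_eq_mul, hgf] at h1
    rw [_root_.map_smul, smul_eq_mul, map_neg, hgf] at h2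
    rcases abs_cases (g t) with ⟨h, _⟩ | ⟨h, _⟩
    · rw [h]; exact h1
    · rw [h]; simpa using h2
  set N := supNorm g with hN
  have hgN : ∀ t, |g t| ≤ N := le_supNorm hgc
  have hpair : f y₀ = pairing g m₀ := by
    rw [hf, pairing_comb p φ hφ m₀]
    exact Finset.sum_congr rfl fun ℓ _ => by rw [hy₀ ℓ, mul_comm]
  have hNpos : 0 < N := by
    rcases (supNorm_nonneg hgc).lt_or_eq with h | h
    · exact h
    · exfalso
      have hg0 : g = fun _ => (0:ℝ) := by
        funext t
        have h2 : |g t| ≤ 0 := le_of_le_of_eq (hgN t) (hN.trans h.symm)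
        exact abs_nonpos_iff.mp h2
      have : f y₀ = 0 := by rw [hpair, hg0, pairing_zero_fun]
      linarith [hfy, hu0]
  have hdNu : d * N ≤ u := by
    rcases hd0.eq_or_lt with h | h
    · rw [← h, zero_mul]; exact hu0.le
    · have hNle : N ≤ u / d := by
        refine Real.sSup_le ?_ (div_nonneg hu0.le hd0)
        rintro x ⟨t, rfl⟩
        exact (le_div_iff₀' h).mpr (hdg t).le
      calc d * N ≤ d * (u / d) := by nlinarith
        _ = u := by field_simp
  have hval : ∑ ℓ, y₀ ℓ * (p ℓ / N) = f y₀ / N := by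
    rw [hf, Finset.sum_div]
    exact Finset.sum_congr rfl fun ℓ _ => by ring
  refine lt_of_lt_of_le ?_ (le_csSup hDbdd ⟨fun ℓ => p ℓ / N, ?_, rfl⟩)
  · rw [hval, lt_div_iff₀ hNpos]
    calc d * N ≤ u := hdNu
      _ < f y₀ := hfy
  · refine Real.sSup_le ?_ zero_le_one
    rintro x ⟨t, rfl⟩
    have hsum' : ∑ ℓ, (p ℓ / N) * φ ℓ t = g t / N := by
      rw [hg, Finset.sum_div]
      exact Finset.sum_congr rfl fun ℓ _ => by ring
    show |∑ ℓ, (p ℓ / N) * φ ℓ t| ≤ 1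
    rw [hsum', abs_div, abs_of_pos hNpos, div_le_one hNpos]
    exact hgN t
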